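/- Let C be a TDD respecting a vtree T over a finite variable set X, and let g1, g1' be twin t1-nodes of C for some non-root node t1 of T. Then the circuit obtained from C by the twin contraction of g1 and g1' is again a TDD respecting T, and it computes the same Boolean function as C. -/
import Mathlib


/-- A vtree: a rooted binary tree whose leaves are labeled by variables. -/
inductive Vtree (V : Type) where
  | leaf : V → Vtree V
  | node : Vtree V → Vtree V → Vtree V

namespace Vtree

variable {V : Type} [DecidableEq V]

/-- The set of variables labeling the leaves of a vtree. -/
def vars : Vtree V → Finset V
  | leaf x => {x}
  | node l r => l.vars ∪ r.vars

/-- A vtree is proper when its leaves carry pairwise distinct variables,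
so that the leaves are in one-to-one correspondence with `vars`. -/
def Proper : Vtree V → Prop
  | leaf _ => True
  | node l r => l.Proper ∧ r.Proper ∧ Disjoint l.vars r.vars

/-- `T.IsNode t` : `t` is (the subtree rooted at) a node of `T`. -/
def IsNode : Vtree V → Vtree V → Prop
  | leaf x, t => t = leaf x
  | node l r, t => t = node l r ∨ l.IsNode t ∨ r.IsNode t

/-- Remove every leaf whose variable is in `Y`, suppressing unary nodes.
Returns `none` if no leaf survives. -/
def restrict (Y : Finset V) : Vtree V → Option (Vtree V)
  | leaf x => if x ∈ Y then none else some (leaf x)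
  | node l r =>
    match l.restrict Y, r.restrict Y with
    | none, o => o
    | some l', none => some l'
    | some l', some r' => some (node l' r')

/-- The vtree `T ∖ x`. -/
def remove (x : V) (T : Vtree V) : Option (Vtree V) := T.restrict {x}

/-- A vtree is linear when every internal node has a leaf child. -/
def Linear : Vtree V → Prop
  | leaf _ => True
  | node l r => ((∃ x, l = leaf x) ∨ (∃ x, r = leaf x)) ∧ l.Linear ∧ r.Linear

/-- The variable order induced by a linear vtree. -/
def order : Vtree V → List V
  | leaf x => [x]
  | node (leaf x) r => x :: r.order
  | node l (leaf x) => x :: l.order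
  | node l r => l.order ++ r.order

end Vtree

/-- Labels of leaf-layer nodes of a TDD: the positive literal, the negative
literal, and the constants 1 and 0. -/
inductive TLab where
  | pos | neg | one | zero
deriving DecidableEq

/-- Disjunction of two leaf labels (used when contracting twin leaf nodes). -/
def TLab.lor : TLab → TLab → TLab
  | .zero, a => a
  | a, .zero => a
  | .one, _ => .one
  | _, .one => .one
  | .pos, .pos => .pos
  | .neg, .neg => .neg
  | .pos, .neg => .one
  | .neg, .pos => .one

/-- A (non-deterministic) tree decision diagram structured along a vtree:
one layer of nodes (identified by natural numbers) per vtree node; leaf-layer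
nodes carry labels, internal-layer nodes carry their sets of input pairs. -/
inductive NTDD (V : Type) where
  | leaf (x : V) (ns : Finset ℕ) (lab : ℕ → TLab)
  | node (l r : NTDD V) (ns : Finset ℕ) (E : ℕ → Finset (ℕ × ℕ))

namespace NTDD

variable {V : Type}

/-- The vtree that an nTDD is structured along. -/
def shape : NTDD V → Vtree V
  | leaf x _ _ => .leaf x
  | node l r _ _ => .node l.shape r.shape

/-- The set of nodes of the top (root) layer. -/
def nodes : NTDD V → Finset ℕ
  | leaf _ ns _ => ns
  | node _ _ ns _ => ns

/-- The size of an nTDD: the total number of input pairs. -/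
def size : NTDD V → ℕ
  | leaf _ _ _ => 0
  | node l r ns E => l.size + r.size + ∑ g ∈ ns, (E g).card

/-- The width of an nTDD: the maximal cardinality of a layer. -/
def width : NTDD V → ℕ
  | leaf _ ns _ => ns.card
  | node l r ns _ => max ns.card (max l.width r.width)

/-- `C.sat g τ` : (the restriction of) the assignment `τ` is a model of the
function `f_g` computed by the top-layer node `g` of `C`. -/
def sat : NTDD V → ℕ → (V → Bool) → Prop
  | leaf x _ lab, g, τ =>
    match lab g with
    | .pos => τ x = true
    | .neg => τ x = false
    | .one => True
    | .zero => False
  | node l r _ E, g, τ => ∃ p ∈ E g, l.sat p.1 τ ∧ r.sat p.2 τ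

/-- Well-formedness: input pairs of top-layer nodes reference nodes of the
children layers. -/
def WF : NTDD V → Prop
  | leaf _ _ _ => True
  | node l r ns E => l.WF ∧ r.WF ∧ ∀ g ∈ ns, ∀ p ∈ E g, p.1 ∈ l.nodes ∧ p.2 ∈ r.nodes

/-- Determinism, turning an nTDD into a TDD: at each leaf layer at most one
node labeled by each of `x`, `¬x`, `1`, and if a node is labeled `1` then all
other nodes are labeled `0`; at each internal layer every pair is the input of
at most one node. -/
def Det : NTDD V → Prop
  | leaf _ ns lab =>
      (∀ g ∈ ns, ∀ g' ∈ ns, lab g = TLab.pos → lab g' = TLab.pos → g = g') ∧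
      (∀ g ∈ ns, ∀ g' ∈ ns, lab g = TLab.neg → lab g' = TLab.neg → g = g') ∧
      (∀ g ∈ ns, ∀ g' ∈ ns, lab g = TLab.one → lab g' = TLab.one → g = g') ∧
      (∀ g ∈ ns, lab g = TLab.one → ∀ g' ∈ ns, g' ≠ g → lab g' = TLab.zero)
  | node l r ns E => l.Det ∧ r.Det ∧ ∀ g ∈ ns, ∀ g' ∈ ns, g ≠ g' → Disjoint (E g) (E g')

/-- `C.Subdiagram D` : `D` is the sub-diagram of `C` sitting at some node of
the underlying vtree (including `C` itself). -/
def Subdiagram : NTDD V → NTDD V → Prop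
  | leaf x ns lab, D => D = leaf x ns lab
  | node l r ns E, D => D = node l r ns E ∨ l.Subdiagram D ∨ r.Subdiagram D

/-- A TDD is full if, at every layer, every assignment is a model of some node
of that layer. -/
def Full (C : NTDD V) : Prop :=
  ∀ D : NTDD V, C.Subdiagram D → ∀ τ : V → Bool, ∃ g ∈ D.nodes, D.sat g τ

end NTDD

/-- A choice of one node id per vtree node, mirroring the vtree: the data of a
certificate. -/
inductive IdTree where
  | leaf (g : ℕ)
  | node (g : ℕ) (l r : IdTree)

/-- The id chosen at the root. -/
def IdTree.root : IdTree → ℕ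
  | .leaf g => g
  | .node g _ _ => g

namespace NTDD

variable {V : Type}

/-- `C.IsCert P τ` : the choice `P` of one node per layer is a certificate for
`τ` in `C` (except for the root condition `P.root = out`, stated separately):
at a leaf labeled `x` the chosen node is labeled `1` or by a literal satisfied
by `τ`, and at an internal node the chosen pair of children nodes is an input
of the chosen node. -/
def IsCert : NTDD V → IdTree → (V → Bool) → Prop
  | leaf x ns lab, IdTree.leaf g, τ =>
      g ∈ ns ∧ (lab g = TLab.one ∨ (lab g = TLab.pos ∧ τ x = true) ∨
        (lab g = TLab.neg ∧ τ x = false))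
  | node l r ns E, IdTree.node g pl pr, τ =>
      g ∈ ns ∧ (pl.root, pr.root) ∈ E g ∧ l.IsCert pl τ ∧ r.IsCert pr τ
  | _, _, _ => False

/-- `SubPair C P D Q` : `D` is the sub-diagram of `C` at some vtree node `t`,
and `Q` is the corresponding part of the certificate data `P` (so `Q.root` is
the node that `P` chooses at `t`). -/
def SubPair : NTDD V → IdTree → NTDD V → IdTree → Prop
  | leaf x ns lab, P, D, Q => D = leaf x ns lab ∧ Q = P
  | node l r ns E, P, D, Q =>
      (D = node l r ns E ∧ Q = P) ∨
      (match P with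
       | IdTree.node _ pl pr => l.SubPair pl D Q ∨ r.SubPair pr D Q
       | _ => False)

/-- Contract the two top-layer nodes `g1, g1'` into the fresh node `v`. -/
def contractLayer (g1 g1' v : ℕ) : NTDD V → NTDD V
  | leaf x ns lab =>
      leaf x (insert v ((ns.erase g1).erase g1'))
        (fun g => if g = v then (lab g1).lor (lab g1') else lab g)
  | node l r ns E =>
      node l r (insert v ((ns.erase g1).erase g1'))
        (fun g => if g = v then E g1 ∪ E g1' else E g)

/-- Twin contraction of nodes `g1, g1'` of the left child layer into `v`:
they are merged in the left layer, and every input pair `(g1, g2)` or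
`(g1', g2)` of a top-layer node is replaced by `(v, g2)`. -/
def contractAtL (g1 g1' v : ℕ) : NTDD V → NTDD V
  | node l r ns E =>
      node (l.contractLayer g1 g1' v) r ns
        (fun g => (E g).image (fun p => if p.1 = g1 ∨ p.1 = g1' then (v, p.2) else p))
  | C => C

/-- Twin contraction of nodes `g1, g1'` of the right child layer into `v`. -/
def contractAtR (g1 g1' v : ℕ) : NTDD V → NTDD V
  | node l r ns E =>
      node l (r.contractLayer g1 g1' v) ns
        (fun g => (E g).image (fun p => if p.2 = g1 ∨ p.2 = g1' then (p.1, v) else p))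
  | C => C

open Classical in
/-- Replace the sub-diagram `D` of `C` by `D'` (in a proper vtree, sub-diagrams
at distinct positions are distinct, so this is unambiguous). -/
noncomputable def replace : NTDD V → NTDD V → NTDD V → NTDD V
  | leaf x ns lab, D, D' => if leaf x ns lab = D then D' else leaf x ns lab
  | node l r ns E, D, D' =>
      if node l r ns E = D then D'
      else node (l.replace D D') (r.replace D D') ns E

/-- `g1` and `g1'` are twins of the left child layer: they have the same
siblings with respect to every top-layer node. -/
def TwinsL (g1 g1' : ℕ) : NTDD V → Prop
  | node l _ ns E => g1 ∈ l.nodes ∧ g1' ∈ l.nodes ∧ g1 ≠ g1' ∧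
      ∀ g ∈ ns, ∀ g2 : ℕ, ((g1, g2) ∈ E g ↔ (g1', g2) ∈ E g)
  | _ => False

/-- `g1` and `g1'` are twins of the right child layer. -/
def TwinsR (g1 g1' : ℕ) : NTDD V → Prop
  | node _ r ns E => g1 ∈ r.nodes ∧ g1' ∈ r.nodes ∧ g1 ≠ g1' ∧
      ∀ g ∈ ns, ∀ g2 : ℕ, ((g2, g1) ∈ E g ↔ (g2, g1') ∈ E g)
  | _ => False

/-- The node set of the left child layer. -/
def leftNodes : NTDD V → Finset ℕ
  | node l _ _ _ => l.nodes
  | _ => ∅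

/-- The node set of the right child layer. -/
def rightNodes : NTDD V → Finset ℕ
  | node _ r _ _ => r.nodes
  | _ => ∅

end NTDD

/-- The number of distinct non-trivial `Y`-subfunctions of the Boolean
function `f` : functions of the form `σ ↦ f (Y.piecewise τ σ)` for some
`τ`, having at least one model. -/
noncomputable def subCount {V : Type} [DecidableEq V] (f : (V → Bool) → Prop) (Y : Finset V) : ℕ :=
  Nat.card {h : (V → Bool) → Prop |
    (∃ τ : V → Bool, h = fun σ => f (Y.piecewise τ σ)) ∧ ∃ σ : V → Bool, h σ}

/-- The number of distinct `Y`-subfunctions of `f` (trivial ones included). -/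
noncomputable def subCountAll {V : Type} [DecidableEq V] (f : (V → Bool) → Prop) (Y : Finset V) : ℕ :=
  Nat.card {h : (V → Bool) → Prop |
    ∃ τ : V → Bool, h = fun σ => f (Y.piecewise τ σ)}


namespace NTDD

variable {V : Type}

/-- Semantics of a leaf label. -/
def labSat (t : TLab) (x : V) (τ : V → Bool) : Prop :=
  match t with
  | .pos => τ x = true
  | .neg => τ x = false
  | .one => True
  | .zero => False

lemma sat_leaf_iff (x : V) (ns : Finset ℕ) (lab : ℕ → TLab) (g : ℕ) (τ : V → Bool) :
    (leaf x ns lab).sat g τ ↔ labSat (lab g) x τ := by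
  cases h : lab g <;> simp [sat, labSat, h]

lemma labSat_lor (a b : TLab) (x : V) (τ : V → Bool) :
    labSat (a.lor b) x τ ↔ (labSat a x τ ∨ labSat b x τ) := by
  cases a <;> cases b <;> simp [TLab.lor, labSat] <;> cases τ x <;> simp

lemma lor_pos {a b : TLab} (h : a.lor b = .pos) : a = .pos ∨ b = .pos := by
  revert h; cases a <;> cases b <;> decide

lemma lor_neg {a b : TLab} (h : a.lor b = .neg) : a = .neg ∨ b = .neg := by
  revert h; cases a <;> cases b <;> decide

lemma lor_one {a b : TLab} (h : a.lor b = .one) :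
    a = .one ∨ b = .one ∨ (a = .pos ∧ b = .neg) ∨ (a = .neg ∧ b = .pos) := by
  revert h; cases a <;> cases b <;> decide

lemma mem_insert_erase {ns : Finset ℕ} {g v g1 g1' : ℕ}
    (hg : g ∈ insert v ((ns.erase g1).erase g1')) (h : g ≠ v) :
    g ∈ ns ∧ g ≠ g1 ∧ g ≠ g1' := by
  rcases Finset.mem_insert.1 hg with h' | h'
  · exact absurd h' h
  · exact ⟨Finset.mem_of_mem_erase (Finset.mem_of_mem_erase h'),
      Finset.ne_of_mem_erase (Finset.mem_of_mem_erase h'), Finset.ne_of_mem_erase h'⟩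

lemma shape_contractLayer (g1 g1' v : ℕ) (l : NTDD V) :
    (l.contractLayer g1 g1' v).shape = l.shape := by
  cases l <;> rfl

lemma nodes_contractLayer (g1 g1' v : ℕ) (l : NTDD V) :
    (l.contractLayer g1 g1' v).nodes = insert v ((l.nodes.erase g1).erase g1') := by
  cases l <;> rfl

lemma sat_contractLayer (g1 g1' v : ℕ) (l : NTDD V) (g : ℕ) (τ : V → Bool) :
    (l.contractLayer g1 g1' v).sat g τ ↔
      if g = v then (l.sat g1 τ ∨ l.sat g1' τ) else l.sat g τ := by
  cases l with
  | leaf x ns lab =>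
    by_cases h : g = v
    · simp [contractLayer, sat_leaf_iff, h, labSat_lor]
    · simp [contractLayer, sat_leaf_iff, h]
  | node a b ns E =>
    simp only [contractLayer, sat]
    by_cases h : g = v
    · rw [if_pos h, if_pos h]
      constructor
      · rintro ⟨p, hp, h1, h2⟩
        rcases Finset.mem_union.1 hp with h' | h'
        · exact Or.inl ⟨p, h', h1, h2⟩
        · exact Or.inr ⟨p, h', h1, h2⟩
      · rintro (⟨p, hp, h1, h2⟩ | ⟨p, hp, h1, h2⟩)
        · exact ⟨p, Finset.mem_union_left _ hp, h1, h2⟩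
        · exact ⟨p, Finset.mem_union_right _ hp, h1, h2⟩
    · rw [if_neg h, if_neg h]

lemma WF_contractLayer {g1 g1' v : ℕ} {l : NTDD V} (hWF : l.WF)
    (h1 : g1 ∈ l.nodes) (h1' : g1' ∈ l.nodes) :
    (l.contractLayer g1 g1' v).WF := by
  cases l with
  | leaf x ns lab => trivial
  | node a b ns E =>
    obtain ⟨ha, hb, hE⟩ := hWF
    simp only [contractLayer, WF]
    refine ⟨ha, hb, ?_⟩
    intro g hg p hp
    by_cases h : g = v
    · rw [if_pos h] at hp
      rcases Finset.mem_union.1 hp with h' | h'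
      · exact hE g1 h1 p h'
      · exact hE g1' h1' p h'
    · rw [if_neg h] at hp
      exact hE g (mem_insert_erase hg h).1 p hp

lemma Det_contractLayer {g1 g1' v : ℕ} {l : NTDD V} (hDet : l.Det)
    (h1 : g1 ∈ l.nodes) (h1' : g1' ∈ l.nodes) (hv : v ∉ l.nodes) :
    (l.contractLayer g1 g1' v).Det := by
  cases l with
  | leaf x ns lab =>
    obtain ⟨hp, hn, ho, hz⟩ := hDet
    simp only [contractLayer, Det]
    refine ⟨?_, ?_, ?_, ?_⟩
    · intro a ha b hb ea eb
      by_cases hav : a = v <;> by_cases hbv : b = v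
      · rw [hav, hbv]
      · exfalso
        rw [if_pos hav] at ea; rw [if_neg hbv] at eb
        obtain ⟨hbns, hb1, hb1'⟩ := mem_insert_erase hb hbv
        rcases lor_pos ea with h | h
        · exact hb1 (hp b hbns g1 h1 eb h)
        · exact hb1' (hp b hbns g1' h1' eb h)
      · exfalso
        rw [if_pos hbv] at eb; rw [if_neg hav] at ea
        obtain ⟨hans, ha1, ha1'⟩ := mem_insert_erase ha hav
        rcases lor_pos eb with h | h
        · exact ha1 (hp a hans g1 h1 ea h)
        · exact ha1' (hp a hans g1' h1' ea h)
      · rw [if_neg hav] at ea; rw [if_neg hbv] at eb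
        exact hp a (mem_insert_erase ha hav).1 b (mem_insert_erase hb hbv).1 ea eb
    · intro a ha b hb ea eb
      by_cases hav : a = v <;> by_cases hbv : b = v
      · rw [hav, hbv]
      · exfalso
        rw [if_pos hav] at ea; rw [if_neg hbv] at eb
        obtain ⟨hbns, hb1, hb1'⟩ := mem_insert_erase hb hbv
        rcases lor_neg ea with h | h
        · exact hb1 (hn b hbns g1 h1 eb h)
        · exact hb1' (hn b hbns g1' h1' eb h)
      · exfalso
        rw [if_pos hbv] at eb; rw [if_neg hav] at ea
        obtain ⟨hans, ha1, ha1'⟩ := mem_insert_erase ha hav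
        rcases lor_neg eb with h | h
        · exact ha1 (hn a hans g1 h1 ea h)
        · exact ha1' (hn a hans g1' h1' ea h)
      · rw [if_neg hav] at ea; rw [if_neg hbv] at eb
        exact hn a (mem_insert_erase ha hav).1 b (mem_insert_erase hb hbv).1 ea eb
    · intro a ha b hb ea eb
      by_cases hav : a = v <;> by_cases hbv : b = v
      · rw [hav, hbv]
      · exfalso
        rw [if_neg hbv] at eb
        obtain ⟨hbns, hb1, hb1'⟩ := mem_insert_erase hb hbv
        have z1 : lab g1 = TLab.zero := hz b hbns eb g1 h1 (fun h => hb1 h.symm)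
        have z2 : lab g1' = TLab.zero := hz b hbns eb g1' h1' (fun h => hb1' h.symm)
        rw [if_pos hav, z1, z2] at ea
        exact absurd ea (by decide)
      · exfalso
        rw [if_neg hav] at ea
        obtain ⟨hans, ha1, ha1'⟩ := mem_insert_erase ha hav
        have z1 : lab g1 = TLab.zero := hz a hans ea g1 h1 (fun h => ha1 h.symm)
        have z2 : lab g1' = TLab.zero := hz a hans ea g1' h1' (fun h => ha1' h.symm)
        rw [if_pos hbv, z1, z2] at eb
        exact absurd eb (by decide)
      · rw [if_neg hav] at ea; rw [if_neg hbv] at eb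
        exact ho a (mem_insert_erase ha hav).1 b (mem_insert_erase hb hbv).1 ea eb
    · intro a ha ea b hb hba
      by_cases hav : a = v
      · rw [if_pos hav] at ea
        have hbv : b ≠ v := fun h => hba (h.trans hav.symm)
        obtain ⟨hbns, hb1, hb1'⟩ := mem_insert_erase hb hbv
        rw [if_neg hbv]
        rcases lor_one ea with h | h | ⟨hpos, hneg⟩ | ⟨hneg, hpos⟩
        · exact hz g1 h1 h b hbns hb1
        · exact hz g1' h1' h b hbns hb1'
        · cases hlb : lab b with
          | pos => exact absurd (hp b hbns g1 h1 hlb hpos) hb1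
          | neg => exact absurd (hn b hbns g1' h1' hlb hneg) hb1'
          | one =>
            have := hz b hbns hlb g1 h1 (fun h => hb1 h.symm)
            rw [this] at hpos; exact absurd hpos (by decide)
          | zero => rfl
        · cases hlb : lab b with
          | pos => exact absurd (hp b hbns g1' h1' hlb hpos) hb1'
          | neg => exact absurd (hn b hbns g1 h1 hlb hneg) hb1
          | one =>
            have := hz b hbns hlb g1 h1 (fun h => hb1 h.symm)
            rw [this] at hneg; exact absurd hneg (by decide)
          | zero => rfl
      · rw [if_neg hav] at ea
        obtain ⟨hans, ha1, ha1'⟩ := mem_insert_erase ha hav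
        by_cases hbv : b = v
        · rw [if_pos hbv]
          rw [hz a hans ea g1 h1 (fun h => ha1 h.symm),
            hz a hans ea g1' h1' (fun h => ha1' h.symm)]
          rfl
        · rw [if_neg hbv]
          exact hz a hans ea b (mem_insert_erase hb hbv).1 hba
  | node a b ns E =>
    obtain ⟨da, db, dE⟩ := hDet
    simp only [contractLayer, Det]
    refine ⟨da, db, ?_⟩
    intro g hg g' hg' hgg'
    by_cases h : g = v <;> by_cases h' : g' = v
    · exact absurd (h.trans h'.symm) hgg'
    · rw [if_pos h, if_neg h']
      obtain ⟨hns, hn1, hn1'⟩ := mem_insert_erase hg' h'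
      exact Finset.disjoint_union_left.2
        ⟨dE g1 h1 g' hns (fun he => hn1 he.symm), dE g1' h1' g' hns (fun he => hn1' he.symm)⟩
    · rw [if_pos h', if_neg h]
      obtain ⟨hns, hn1, hn1'⟩ := mem_insert_erase hg h
      exact (Finset.disjoint_union_right.2
        ⟨dE g hns g1 h1 hn1, dE g hns g1' h1' hn1'⟩)
    · rw [if_neg h, if_neg h']
      exact dE g (mem_insert_erase hg h).1 g' (mem_insert_erase hg' h').1 hgg'

lemma contractAtL_good {g1 g1' v : ℕ} {D : NTDD V}
    (htw : D.TwinsL g1 g1') (hv : v ∉ D.leftNodes) (hWF : D.WF) (hDet : D.Det) :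
    (D.contractAtL g1 g1' v).shape = D.shape ∧
    (D.contractAtL g1 g1' v).nodes = D.nodes ∧
    (D.contractAtL g1 g1' v).WF ∧
    (D.contractAtL g1 g1' v).Det ∧
    ∀ g ∈ D.nodes, ∀ τ : V → Bool, ((D.contractAtL g1 g1' v).sat g τ ↔ D.sat g τ) := by
  cases D with
  | leaf x ns lab => exact absurd htw (by simp [TwinsL])
  | node l r ns E =>
    obtain ⟨h1, h1', hne, htwin⟩ := htw
    obtain ⟨hWl, hWr, hWE⟩ := hWF
    obtain ⟨hDl, hDr, hDE⟩ := hDet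
    have hvl : v ∉ l.nodes := hv
    have key : ∀ {g : ℕ} {p : ℕ × ℕ}, g ∈ ns → p ∈ E g → (p.1 = g1 ∨ p.1 = g1') →
        ((g1, p.2) ∈ E g ∧ (g1', p.2) ∈ E g) := by
      intro g p hg hp hc
      rcases hc with h | h
      · have hp1 : (g1, p.2) ∈ E g := by rwa [← h, Prod.mk.eta]
        exact ⟨hp1, (htwin g hg p.2).1 hp1⟩
      · have hp1 : (g1', p.2) ∈ E g := by rwa [← h, Prod.mk.eta]
        exact ⟨(htwin g hg p.2).2 hp1, hp1⟩
    refine ⟨?_, rfl, ?_, ?_, ?_⟩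
    · simp only [contractAtL, shape, shape_contractLayer]
    · simp only [contractAtL, WF]
      refine ⟨WF_contractLayer hWl h1 h1', hWr, ?_⟩
      intro g hg q hq
      simp only [Finset.mem_image] at hq
      obtain ⟨p, hp, rfl⟩ := hq
      obtain ⟨hpl, hpr⟩ := hWE g hg p hp
      rw [nodes_contractLayer]
      by_cases hc : p.1 = g1 ∨ p.1 = g1'
      · rw [if_pos hc]
        exact ⟨Finset.mem_insert_self _ _, hpr⟩
      · rw [if_neg hc]
        push_neg at hc
        exact ⟨Finset.mem_insert_of_mem
          (Finset.mem_erase.2 ⟨hc.2, Finset.mem_erase.2 ⟨hc.1, hpl⟩⟩), hpr⟩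
    · simp only [contractAtL, Det]
      refine ⟨Det_contractLayer hDl h1 h1' hvl, hDr, ?_⟩
      intro g hg g' hg' hgg'
      rw [Finset.disjoint_left]
      intro q hq hq'
      simp only [Finset.mem_image] at hq hq'
      obtain ⟨p, hp, rfl⟩ := hq
      obtain ⟨p', hp', he⟩ := hq'
      by_cases hc : p.1 = g1 ∨ p.1 = g1' <;> by_cases hc' : p'.1 = g1 ∨ p'.1 = g1'
      · rw [if_pos hc, if_pos hc'] at he
        have h2 := (key hg hp hc).1
        have h2' := (key hg' hp' hc').1
        rw [(Prod.ext_iff.1 he).2] at h2'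
        exact Finset.disjoint_left.1 (hDE g hg g' hg' hgg') h2 h2'
      · rw [if_pos hc, if_neg hc'] at he
        have hp1v : p'.1 = v := by rw [he]
        exact hvl (hp1v ▸ (hWE g' hg' p' hp').1)
      · rw [if_neg hc, if_pos hc'] at he
        have hp1v : p.1 = v := by rw [← he]
        exact hvl (hp1v ▸ (hWE g hg p hp).1)
      · rw [if_neg hc, if_neg hc'] at he
        exact Finset.disjoint_left.1 (hDE g hg g' hg' hgg') hp (he ▸ hp')
    · intro g hg τ
      simp only [contractAtL, sat]
      constructor
      · rintro ⟨q, hq, hsl, hsr⟩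
        simp only [Finset.mem_image] at hq
        obtain ⟨p, hp, rfl⟩ := hq
        by_cases hc : p.1 = g1 ∨ p.1 = g1'
        · rw [if_pos hc] at hsl hsr
          rw [sat_contractLayer, if_pos rfl] at hsl
          rcases hsl with h | h
          · exact ⟨(g1, p.2), (key hg hp hc).1, h, hsr⟩
          · exact ⟨(g1', p.2), (key hg hp hc).2, h, hsr⟩
        · rw [if_neg hc] at hsl hsr
          have hpv : p.1 ≠ v := fun h => hvl (h ▸ (hWE g hg p hp).1)
          rw [sat_contractLayer, if_neg hpv] at hsl
          exact ⟨p, hp, hsl, hsr⟩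
      · rintro ⟨p, hp, hsl, hsr⟩
        by_cases hc : p.1 = g1 ∨ p.1 = g1'
        · refine ⟨(v, p.2), Finset.mem_image.2 ⟨p, hp, by rw [if_pos hc]⟩, ?_, hsr⟩
          rw [sat_contractLayer, if_pos rfl]
          rcases hc with h | h
          · rw [h] at hsl; exact Or.inl hsl
          · rw [h] at hsl; exact Or.inr hsl
        · refine ⟨p, Finset.mem_image.2 ⟨p, hp, by rw [if_neg hc]⟩, ?_, hsr⟩
          have hpv : p.1 ≠ v := fun h => hvl (h ▸ (hWE g hg p hp).1)
          rw [sat_contractLayer, if_neg hpv]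
          exact hsl

lemma contractAtR_good {g1 g1' v : ℕ} {D : NTDD V}
    (htw : D.TwinsR g1 g1') (hv : v ∉ D.rightNodes) (hWF : D.WF) (hDet : D.Det) :
    (D.contractAtR g1 g1' v).shape = D.shape ∧
    (D.contractAtR g1 g1' v).nodes = D.nodes ∧
    (D.contractAtR g1 g1' v).WF ∧
    (D.contractAtR g1 g1' v).Det ∧
    ∀ g ∈ D.nodes, ∀ τ : V → Bool, ((D.contractAtR g1 g1' v).sat g τ ↔ D.sat g τ) := by
  cases D with
  | leaf x ns lab => exact absurd htw (by simp [TwinsR])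
  | node l r ns E =>
    obtain ⟨h1, h1', hne, htwin⟩ := htw
    obtain ⟨hWl, hWr, hWE⟩ := hWF
    obtain ⟨hDl, hDr, hDE⟩ := hDet
    have hvr : v ∉ r.nodes := hv
    have key : ∀ {g : ℕ} {p : ℕ × ℕ}, g ∈ ns → p ∈ E g → (p.2 = g1 ∨ p.2 = g1') →
        ((p.1, g1) ∈ E g ∧ (p.1, g1') ∈ E g) := by
      intro g p hg hp hc
      rcases hc with h | h
      · have hp1 : (p.1, g1) ∈ E g := by rwa [← h, Prod.mk.eta]
        exact ⟨hp1, (htwin g hg p.1).1 hp1⟩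
      · have hp1 : (p.1, g1') ∈ E g := by rwa [← h, Prod.mk.eta]
        exact ⟨(htwin g hg p.1).2 hp1, hp1⟩
    refine ⟨?_, rfl, ?_, ?_, ?_⟩
    · simp only [contractAtR, shape, shape_contractLayer]
    · simp only [contractAtR, WF]
      refine ⟨hWl, WF_contractLayer hWr h1 h1', ?_⟩
      intro g hg q hq
      simp only [Finset.mem_image] at hq
      obtain ⟨p, hp, rfl⟩ := hq
      obtain ⟨hpl, hpr⟩ := hWE g hg p hp
      rw [nodes_contractLayer]
      by_cases hc : p.2 = g1 ∨ p.2 = g1'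
      · rw [if_pos hc]
        exact ⟨hpl, Finset.mem_insert_self _ _⟩
      · rw [if_neg hc]
        push_neg at hc
        exact ⟨hpl, Finset.mem_insert_of_mem
          (Finset.mem_erase.2 ⟨hc.2, Finset.mem_erase.2 ⟨hc.1, hpr⟩⟩)⟩
    · simp only [contractAtR, Det]
      refine ⟨hDl, Det_contractLayer hDr h1 h1' hvr, ?_⟩
      intro g hg g' hg' hgg'
      rw [Finset.disjoint_left]
      intro q hq hq'
      simp only [Finset.mem_image] at hq hq'
      obtain ⟨p, hp, rfl⟩ := hq
      obtain ⟨p', hp', he⟩ := hq'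
      by_cases hc : p.2 = g1 ∨ p.2 = g1' <;> by_cases hc' : p'.2 = g1 ∨ p'.2 = g1'
      · rw [if_pos hc, if_pos hc'] at he
        have h2 := (key hg hp hc).1
        have h2' := (key hg' hp' hc').1
        rw [(Prod.ext_iff.1 he).1] at h2'
        exact Finset.disjoint_left.1 (hDE g hg g' hg' hgg') h2 h2'
      · rw [if_pos hc, if_neg hc'] at he
        have hp2v : p'.2 = v := by rw [he]
        exact hvr (hp2v ▸ (hWE g' hg' p' hp').2)
      · rw [if_neg hc, if_pos hc'] at he
        have hp2v : p.2 = v := by rw [← he]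
        exact hvr (hp2v ▸ (hWE g hg p hp).2)
      · rw [if_neg hc, if_neg hc'] at he
        exact Finset.disjoint_left.1 (hDE g hg g' hg' hgg') hp (he ▸ hp')
    · intro g hg τ
      simp only [contractAtR, sat]
      constructor
      · rintro ⟨q, hq, hsl, hsr⟩
        simp only [Finset.mem_image] at hq
        obtain ⟨p, hp, rfl⟩ := hq
        by_cases hc : p.2 = g1 ∨ p.2 = g1'
        · rw [if_pos hc] at hsl hsr
          rw [sat_contractLayer, if_pos rfl] at hsr
          rcases hsr with h | h
          · exact ⟨(p.1, g1), (key hg hp hc).1, hsl, h⟩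
          · exact ⟨(p.1, g1'), (key hg hp hc).2, hsl, h⟩
        · rw [if_neg hc] at hsl hsr
          have hpv : p.2 ≠ v := fun h => hvr (h ▸ (hWE g hg p hp).2)
          rw [sat_contractLayer, if_neg hpv] at hsr
          exact ⟨p, hp, hsl, hsr⟩
      · rintro ⟨p, hp, hsl, hsr⟩
        by_cases hc : p.2 = g1 ∨ p.2 = g1'
        · refine ⟨(p.1, v), Finset.mem_image.2 ⟨p, hp, by rw [if_pos hc]⟩, hsl, ?_⟩
          rw [sat_contractLayer, if_pos rfl]
          rcases hc with h | h
          · rw [h] at hsr; exact Or.inl hsr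
          · rw [h] at hsr; exact Or.inr hsr
        · refine ⟨p, Finset.mem_image.2 ⟨p, hp, by rw [if_neg hc]⟩, hsl, ?_⟩
          have hpv : p.2 ≠ v := fun h => hvr (h ▸ (hWE g hg p hp).2)
          rw [sat_contractLayer, if_neg hpv]
          exact hsr

lemma replace_good (D D' : NTDD V)
    (h : D.WF → D.Det →
      D'.shape = D.shape ∧ D'.nodes = D.nodes ∧ D'.WF ∧ D'.Det ∧
        ∀ g ∈ D.nodes, ∀ τ : V → Bool, (D'.sat g τ ↔ D.sat g τ)) :
    ∀ C : NTDD V, C.WF → C.Det →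
      (C.replace D D').shape = C.shape ∧ (C.replace D D').nodes = C.nodes ∧
      (C.replace D D').WF ∧ (C.replace D D').Det ∧
      ∀ g ∈ C.nodes, ∀ τ : V → Bool, ((C.replace D D').sat g τ ↔ C.sat g τ) := by
  intro C
  induction C with
  | leaf x ns lab =>
    intro hWF hDet
    rw [replace]
    by_cases he : leaf x ns lab = D
    · rw [if_pos he]
      subst he
      exact h hWF hDet
    · rw [if_neg he]
      exact ⟨rfl, rfl, hWF, hDet, fun g _ τ => Iff.rfl⟩
  | node l r ns E ihl ihr =>
    intro hWF hDet
    rw [replace]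
    by_cases he : node l r ns E = D
    · rw [if_pos he]
      subst he
      exact h hWF hDet
    · rw [if_neg he]
      obtain ⟨hWl, hWr, hWE⟩ := hWF
      obtain ⟨hDl, hDr, hDE⟩ := hDet
      obtain ⟨sl, nl, wl, dl, satl⟩ := ihl hWl hDl
      obtain ⟨sr, nr, wr, dr, satr⟩ := ihr hWr hDr
      refine ⟨?_, rfl, ?_, ?_, ?_⟩
      · simp only [shape, sl, sr]
      · exact ⟨wl, wr, fun g hg p hp => by
          rw [nl, nr]; exact hWE g hg p hp⟩
      · exact ⟨dl, dr, hDE⟩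
      · intro g hg τ
        simp only [sat]
        constructor
        · rintro ⟨p, hp, h1, h2⟩
          exact ⟨p, hp, (satl p.1 (hWE g hg p hp).1 τ).1 h1,
            (satr p.2 (hWE g hg p hp).2 τ).1 h2⟩
        · rintro ⟨p, hp, h1, h2⟩
          exact ⟨p, hp, (satl p.1 (hWE g hg p hp).1 τ).2 h1,
            (satr p.2 (hWE g hg p hp).2 τ).2 h2⟩

end NTDD

/-- Twin contraction: let `C` be a TDD respecting a vtree
`T` over a finite variable set `X`, let `D` be the sub-diagram of `C` at an
internal node `t` of `T` (so that the child layers of `D` sit at non-root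
nodes `t1` of `T`), and let `g1, g1'` be twin nodes of a child layer of `D`
and `v` a fresh node id. Then the circuit obtained from `C` by the twin
contraction of `g1` and `g1'` is again a TDD respecting `T` computing the
same Boolean function as `C`. Both the left-child and the right-child cases
are stated. -/
theorem stmt8 {V : Type} [DecidableEq V] (X : Finset V) (T : Vtree V)
    (hTp : T.Proper) (hTX : T.vars = X)
    (C : NTDD V) (out : ℕ) (hsh : C.shape = T) (hWF : C.WF) (hDet : C.Det)
    (hout : out ∈ C.nodes)
    (D : NTDD V) (hD : C.Subdiagram D) (g1 g1' v : ℕ) :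
    (D.TwinsL g1 g1' → v ∉ D.leftNodes →
      (C.replace D (D.contractAtL g1 g1' v)).shape = T ∧
      (C.replace D (D.contractAtL g1 g1' v)).WF ∧
      (C.replace D (D.contractAtL g1 g1' v)).Det ∧
      out ∈ (C.replace D (D.contractAtL g1 g1' v)).nodes ∧
      (∀ τ : V → Bool,
        ((C.replace D (D.contractAtL g1 g1' v)).sat out τ ↔ C.sat out τ))) ∧
    (D.TwinsR g1 g1' → v ∉ D.rightNodes →
      (C.replace D (D.contractAtR g1 g1' v)).shape = T ∧
      (C.replace D (D.contractAtR g1 g1' v)).WF ∧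
      (C.replace D (D.contractAtR g1 g1' v)).Det ∧
      out ∈ (C.replace D (D.contractAtR g1 g1' v)).nodes ∧
      (∀ τ : V → Bool,
        ((C.replace D (D.contractAtR g1 g1' v)).sat out τ ↔ C.sat out τ))) := by
  constructor
  · intro htw hv
    obtain ⟨hs, hn, hW, hD', hsat⟩ :=
      NTDD.replace_good D (D.contractAtL g1 g1' v)
        (fun hWFD hDetD => NTDD.contractAtL_good htw hv hWFD hDetD) C hWF hDet
    exact ⟨hs.trans hsh, hW, hD', by rw [hn]; exact hout, fun τ => hsat out hout τ⟩
  · intro htw hv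
    obtain ⟨hs, hn, hW, hD', hsat⟩ :=
      NTDD.replace_good D (D.contractAtR g1 g1' v)
        (fun hWFD hDetD => NTDD.contractAtR_good htw hv hWFD hDetD) C hWF hDet
    exact ⟨hs.trans hsh, hW, hD', by rw [hn]; exact hout, fun τ => hsat out hout τ⟩
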